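/- Let n be a positive natural number and let B : Mₙ(ℂ) → Mₙ(ℂ) → ℂ be ℂ-bilinear. Assume: (i) B 1 1 = 1; (ii) for every finite index type ι and all families x, y : ι → Mₙ(ℂ), the complex number Σ_{i,j} B ((x i)ᴴ * (x j)) ((y j) * (y i)ᴴ) is a nonnegative real number; (iii) B p (1 - p) = 0 for every projection p ∈ Mₙ(ℂ) (i.e. every p with pᴴ = p and p * p = p). Then B x y = trace(x * y) / n for all x, y ∈ Mₙ(ℂ). -/

import Mathlib

open scoped ComplexOrder
open Complex Matrix

set_option linter.unreachableTactic false
set_option linter.unusedTactic false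

private lemma real_quad (c d : ℝ) (h : ∀ u : ℝ, 0 ≤ c * u + d * u ^ 2) : c = 0 := by
  by_contra hc
  have h1 := h 1
  have h2 := h (-1)
  have hd : |c| ≤ d := by cases abs_cases c <;> nlinarith
  have hd0 : 0 < d := lt_of_lt_of_le (abs_pos.mpr hc) hd
  have key := h (-c / (2 * d))
  have e : c * (-c / (2 * d)) + d * (-c / (2 * d)) ^ 2 = -(c ^ 2 / (4 * d)) := by
    field_simp; ring
  rw [e, neg_nonneg, div_nonpos_iff] at key
  have hc2 : 0 < c ^ 2 := pow_pos (abs_pos.mpr hc) 2 |>.trans_eq (by rw [_root_.sq_abs])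
  rcases key with ⟨h3, h4⟩ | ⟨h3, h4⟩ <;> nlinarith

private lemma quad_zero (b b' d : ℂ)
    (h : ∀ t : ℂ, 0 ≤ t * b + (starRingEnd ℂ) t * b' + (t * (starRingEnd ℂ) t) * d) :
    b = 0 ∧ b' = 0 := by
  have H : ∀ t : ℂ, 0 ≤ (t * b + (starRingEnd ℂ) t * b' + (t * (starRingEnd ℂ) t) * d).re ∧
      (t * b + (starRingEnd ℂ) t * b' + (t * (starRingEnd ℂ) t) * d).im = 0 := by
    intro t
    have := h t
    rw [Complex.le_def] at this
    exact ⟨by simpa using this.1, by simpa using this.2.symm⟩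
  -- imaginary-part facts
  have h1 := (H 1).2
  have hm1 := (H (-1)).2
  have hI := (H I).2
  have hmI := (H (-I)).2
  simp [Complex.add_im, Complex.mul_im, Complex.mul_re, Complex.conj_re, Complex.conj_im,
    Complex.I_re, Complex.I_im] at h1 hm1 hI hmI
  have hbre : b'.re = b.re := by linarith
  have hbim : b'.im = -b.im := by linarith
  have hconj : b' = (starRingEnd ℂ) b := by
    apply Complex.ext <;> simp [hbre, hbim]
  -- real-part quadratic in direction conj b
  have key : ∀ s : ℝ, 0 ≤ (2 * Complex.normSq b) * s + (Complex.normSq b * d.re) * s ^ 2 := by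
    intro s
    have h2 := (H ((s : ℂ) * (starRingEnd ℂ) b)).1
    rw [hconj] at h2
    have e : (s : ℂ) * (starRingEnd ℂ) b * b + (starRingEnd ℂ) ((s : ℂ) * (starRingEnd ℂ) b) * (starRingEnd ℂ) b
        + ((s : ℂ) * (starRingEnd ℂ) b * (starRingEnd ℂ) ((s : ℂ) * (starRingEnd ℂ) b)) * d
        = ((2 * Complex.normSq b * s : ℝ) : ℂ) + ((Complex.normSq b * s ^ 2 : ℝ) : ℂ) * d := by
      simp only [_root_.map_mul, Complex.conj_conj, Complex.conj_ofReal]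
      push_cast
      rw [show ((s : ℂ)) * (starRingEnd ℂ) b * b + (s : ℂ) * b * (starRingEnd ℂ) b
          + ((s : ℂ) * (starRingEnd ℂ) b * ((s : ℂ) * b)) * d
          = (2 * (s : ℂ)) * ((starRingEnd ℂ) b * b) + ((s : ℂ) ^ 2) * ((starRingEnd ℂ) b * b) * d by ring]
      rw [Complex.normSq_eq_conj_mul_self]
      ring
    rw [e] at h2
    simp only [Complex.add_re, Complex.ofReal_re, Complex.re_ofReal_mul] at h2
    nlinarith [h2]
  have hb0 : 2 * Complex.normSq b = 0 := real_quad _ _ key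
  have : b = 0 := by
    have : Complex.normSq b = 0 := by linarith
    exact Complex.normSq_eq_zero.mp this
  exact ⟨this, by simp [hconj, this]⟩

private lemma quad_eq (a b b' d : ℂ)
    (h : ∀ t : ℂ, 0 ≤ a + t * b + (starRingEnd ℂ) t * b' + (t * (starRingEnd ℂ) t) * d)
    (hsum : b + b' = a + d) : b = a ∧ d = a := by
  have H : ∀ t : ℂ, 0 ≤ (a + t * b + (starRingEnd ℂ) t * b' + (t * (starRingEnd ℂ) t) * d).re ∧
      (a + t * b + (starRingEnd ℂ) t * b' + (t * (starRingEnd ℂ) t) * d).im = 0 := by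
    intro t
    have := h t
    rw [Complex.le_def] at this
    exact ⟨by simpa using this.1, by simpa using this.2.symm⟩
  have h0 := (H 0).2
  have h1 := (H 1).2
  have hm1 := (H (-1)).2
  have hI := (H I).2
  simp [Complex.add_im, Complex.mul_im, Complex.mul_re, Complex.conj_re, Complex.conj_im,
    Complex.I_re, Complex.I_im] at h0 h1 hm1 hI
  -- h0 : a.im = 0, then d.im = 0, b'.re = b.re, b'.im = -b.im
  have hdim : d.im = 0 := by linarith
  have hbre : b'.re = b.re := by linarith
  have hbim : b'.im = -b.im := by linarith
  have hsre : b.re + b'.re = a.re + d.re := by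
    have := congrArg Complex.re hsum; simpa using this
  -- step 1 : d.re = a.re
  have key1 : ∀ u : ℝ, 0 ≤ (d.re - a.re) * u + d.re * u ^ 2 := by
    intro u
    have h2 := (H ((-(1 + u) : ℝ) : ℂ)).1
    simp only [Complex.conj_ofReal, Complex.add_re, Complex.mul_re, Complex.mul_im, Complex.ofReal_re,
      Complex.ofReal_im, zero_mul, mul_zero, sub_zero, zero_sub, add_zero] at h2
    have hbval : b.re = (a.re + d.re) / 2 := by linarith
    simp only [hbre] at h2
    rw [hbval] at h2
    ring_nf at h2 ⊢
    linarith [h2]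
  have hda : d.re = a.re := by
    have := real_quad _ _ key1; linarith
  have hbrea : b.re = a.re := by linarith
  -- step 2 : b.im = 0
  have key2 : ∀ v : ℝ, 0 ≤ (-2 * b.im) * v + a.re * v ^ 2 := by
    intro v
    have h2 := (H (-1 + (v : ℝ) * I)).1
    have hc : (starRingEnd ℂ) (-1 + (v : ℝ) * I) = -1 - (v : ℝ) * I := by
      simp [_root_.map_add, _root_.map_mul, Complex.conj_ofReal, Complex.conj_I]; ring
    rw [hc] at h2
    simp only [Complex.add_re, Complex.sub_re, Complex.mul_re, Complex.mul_im, Complex.add_im,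
      Complex.sub_im, Complex.neg_re, Complex.neg_im, Complex.one_re, Complex.one_im,
      Complex.ofReal_re, Complex.ofReal_im, Complex.I_re, Complex.I_im] at h2
    simp only [hbre, hbim, hda, hdim] at h2
    rw [hbrea] at h2
    ring_nf at h2 ⊢
    linarith [h2]
  have hbim0 : b.im = 0 := by
    have := real_quad _ _ key2; linarith
  have haim : a.im = 0 := h0
  constructor
  · apply Complex.ext <;> simp [hbrea, hbim0, haim]
  · apply Complex.ext <;> simp [hda, hdim, haim]

private def Eu (n : ℕ) (i j : Fin n) : Matrix (Fin n) (Fin n) ℂ :=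
  Matrix.single i j 1

private lemma Eu_conjT (n : ℕ) (i j : Fin n) : (Eu n i j)ᴴ = Eu n j i := by
  ext a b
  simp only [Eu, Matrix.conjTranspose_apply, Matrix.single, Matrix.of_apply]
  split_ifs with h1 h2 h2 <;> simp_all [and_comm] <;> tauto

private lemma Eu_mul_same (n : ℕ) (i j k : Fin n) : Eu n i j * Eu n j k = Eu n i k := by
  simp [Eu, Matrix.single_mul_single_same]

private lemma Eu_mul_ne (n : ℕ) (i : Fin n) {j k : Fin n} (h : j ≠ k) (l : Fin n) :
    Eu n i j * Eu n k l = 0 := by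
  unfold Eu; exact Matrix.single_mul_single_of_ne (h := h) ..

private lemma Eu_one (n : ℕ) : (1 : Matrix (Fin n) (Fin n) ℂ) = ∑ i, Eu n i i := by
  conv_lhs => rw [Matrix.matrix_eq_sum_single (1 : Matrix (Fin n) (Fin n) ℂ)]
  refine Finset.sum_congr rfl fun i _ => ?_
  rw [Finset.sum_eq_single i]
  · simp [Eu, Matrix.one_apply]
  · intro b _ hb; simp [Matrix.one_apply, Ne.symm hb]
  · intro h; exact absurd (Finset.mem_univ i) h

theorem diagonal_state_on_matrix_factor_is_normalized_trace
    (n : ℕ) (hn : 0 < n)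
    (B : Matrix (Fin n) (Fin n) ℂ →ₗ[ℂ] Matrix (Fin n) (Fin n) ℂ →ₗ[ℂ] ℂ)
    (hunit : B 1 1 = 1)
    (hpos : ∀ (ι : Type) [Fintype ι] (x y : ι → Matrix (Fin n) (Fin n) ℂ),
      0 ≤ ∑ i, ∑ j, B ((x i).conjTranspose * (x j)) ((y j) * (y i).conjTranspose))
    (hdiag : ∀ p : Matrix (Fin n) (Fin n) ℂ,
      p.conjTranspose = p → p * p = p → B p (1 - p) = 0) :
    ∀ x y : Matrix (Fin n) (Fin n) ℂ, B x y = (x * y).trace / n := by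
  -- master quadratic
  have master : ∀ (x₁ y₁ x₂ y₂ : Matrix (Fin n) (Fin n) ℂ) (t : ℂ),
      0 ≤ B (x₁ᴴ * x₁) (y₁ * y₁ᴴ) + t * B (x₁ᴴ * x₂) (y₂ * y₁ᴴ)
        + (starRingEnd ℂ) t * B (x₂ᴴ * x₁) (y₁ * y₂ᴴ)
        + (t * (starRingEnd ℂ) t) * B (x₂ᴴ * x₂) (y₂ * y₂ᴴ) := by
    intro x₁ y₁ x₂ y₂ t
    have := hpos (Fin 2) ![x₁, t • x₂] ![y₁, y₂]
    rw [Fin.sum_univ_two] at this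
    rw [Fin.sum_univ_two, Fin.sum_univ_two] at this
    simp only [Matrix.cons_val_zero, Matrix.cons_val_one, Matrix.head_cons] at this
    have hct : (t • x₂)ᴴ = (starRingEnd ℂ) t • x₂ᴴ := by
      rw [Matrix.conjTranspose_smul]; rfl
    rw [hct] at this
    simp only [mul_smul_comm, smul_mul_assoc, smul_smul,
      LinearMap.map_smul, LinearMap.smul_apply, smul_eq_mul] at this
    convert this using 1
    ring
  -- projections annihilate
  have key1 : ∀ p : Matrix (Fin n) (Fin n) ℂ, pᴴ = p → p * p = p →
      ∀ x y : Matrix (Fin n) (Fin n) ℂ, B (p * x) (y * (1 - p)) = 0 ∧ B (x * p) ((1 - p) * y) = 0 := by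
    intro p hp hpp x y
    have h1p : (1 - p)ᴴ = 1 - p := by
      rw [Matrix.conjTranspose_sub, Matrix.conjTranspose_one, hp]
    have h1pp : (1 - p) * (1 - p) = 1 - p := by
      have e : (1 - p) * (1 - p) = 1 - p - p + p * p := by noncomm_ring
      rw [e, hpp]; abel
    have hq := quad_zero (B (p * x) (y * (1 - p))) (B (xᴴ * p) ((1 - p) * yᴴ))
      (B (xᴴ * x) (y * yᴴ)) ?_
    · refine ⟨hq.1, ?_⟩
      have := (quad_zero (B (p * xᴴ) (yᴴ * (1 - p))) (B (x * p) ((1 - p) * y))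
        (B (x * xᴴ) (yᴴ * y)) ?_).2
      · exact this
      · intro t
        have := master p (1 - p) xᴴ yᴴ t
        rw [hp, hpp, h1p, h1pp, Matrix.conjTranspose_conjTranspose,
          hdiag p hp hpp] at this
        simpa using this
    · intro t
      have := master p (1 - p) x y t
      rw [hp, hpp, h1p, h1pp, hdiag p hp hpp] at this
      simpa using this
  -- matrix units
  have hproj : ∀ i, (Eu n i i)ᴴ = Eu n i i ∧ Eu n i i * Eu n i i = Eu n i i := fun i =>
    ⟨Eu_conjT n i i, Eu_mul_same n i i i⟩
  -- vanishing of off-diagonal values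
  have vanish : ∀ i j k l : Fin n, (l ≠ i ∨ k ≠ j) → B (Eu n i j) (Eu n k l) = 0 := by
    intro i j k l hne
    rcases hne with hli | hkj
    · have := (key1 (Eu n i i) (hproj i).1 (hproj i).2 (Eu n i j) (Eu n k l)).1
      rw [Eu_mul_same] at this
      rw [show Eu n k l * (1 - Eu n i i) = Eu n k l by
        rw [Matrix.mul_sub, mul_one, Eu_mul_ne n k hli i]; simp] at this
      exact this
    · have := (key1 (Eu n j j) (hproj j).1 (hproj j).2 (Eu n i j) (Eu n k l)).2
      rw [Eu_mul_same] at this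
      rw [show (1 - Eu n j j) * Eu n k l = Eu n k l by
        rw [Matrix.sub_mul, one_mul, Eu_mul_ne n j (Ne.symm hkj) l]; simp] at this
      exact this
  set c : Fin n → Fin n → ℂ := fun i j => B (Eu n i j) (Eu n j i) with hc_def
  have hBE : ∀ a b k l : Fin n, B (Eu n a b) (Eu n k l)
      = if k = b ∧ l = a then c a b else 0 := by
    intro a b k l
    by_cases h1 : l = a
    · by_cases h2 : k = b
      · subst h1; subst h2; simp [hc_def]
      · rw [vanish _ _ _ _ (Or.inr h2)]; simp [h2]
    · rw [vanish _ _ _ _ (Or.inl h1)]; simp [h1]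
  -- the key sum identity from the rank-one projection (e_i + e_j)/sqrt 2
  have hsum : ∀ i j : Fin n, i ≠ j → c i j + c j i = c i i + c j j := by
    intro i j hij
    set q : Matrix (Fin n) (Fin n) ℂ := Eu n i i + Eu n i j + Eu n j i + Eu n j j with hq_def
    have hqH : qᴴ = q := by
      simp only [hq_def, Matrix.conjTranspose_add, Eu_conjT]
      abel
    have hq2 : q * q = (2 : ℂ) • q := by
      simp only [hq_def, add_mul, mul_add, Eu_mul_same, Eu_mul_ne n _ hij,
        Eu_mul_ne n _ (Ne.symm hij)]
      rw [two_smul]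
      abel
    set p : Matrix (Fin n) (Fin n) ℂ := (2 : ℂ)⁻¹ • q with hp_def
    have hpH : pᴴ = p := by
      rw [hp_def, Matrix.conjTranspose_smul, hqH]
      norm_num
    have hpp : p * p = p := by
      rw [hp_def, smul_mul_smul_comm, hq2, smul_smul]
      norm_num
    have hd := hdiag p hpH hpp
    rw [map_sub] at hd
    rw [Eu_one n] at hd
    simp only [hp_def, hq_def, LinearMap.map_smul, map_add, LinearMap.add_apply,
      LinearMap.smul_apply, map_sum, _root_.map_smul, smul_eq_mul, hBE] at hd
    simp only [hij, Ne.symm hij, and_self, and_false, false_and, if_false, if_true,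
      Finset.sum_ite_eq', Finset.mem_univ, Finset.sum_const_zero] at hd
    have himp1 : ∀ x : Fin n, ¬(x = j ∧ x = i) := by rintro x ⟨rfl, rfl⟩; exact hij rfl
    have himp2 : ∀ x : Fin n, ¬(x = i ∧ x = j) := by rintro x ⟨rfl, rfl⟩; exact hij rfl
    simp only [himp1, himp2, if_false, add_zero, zero_add, mul_add,
      Finset.sum_add_distrib, mul_ite, mul_zero, Finset.sum_ite_eq',
      Finset.mem_univ, if_true] at hd
    linear_combination (-4 : ℂ) * hd
  -- all c values are equal
  have quadc : ∀ i j : Fin n, i ≠ j → c i j = c i i ∧ c j j = c i i := by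
    intro i j hij
    apply quad_eq (c i i) (c i j) (c j i) (c j j) _ (hsum i j hij)
    intro t
    have hm := master (Eu n i i) (Eu n i i) (Eu n i j) (Eu n j i) t
    simp only [Eu_conjT, Eu_mul_same] at hm
    exact hm
  have z : Fin n := ⟨0, hn⟩
  have hall : ∀ i j : Fin n, c i j = c z z := by
    have hdiagc : ∀ i : Fin n, c i i = c z z := by
      intro i
      by_cases hiz : i = z
      · rw [hiz]
      · have h := quadc i z hiz
        rw [← h.1, h.2, h.1]
    intro i j
    by_cases hij : i = j
    · rw [hij, hdiagc j]
    · rw [(quadc i j hij).1, hdiagc i]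
  -- normalization
  have hnorm : (n : ℂ) * c z z = 1 := by
    have h1 := hunit
    rw [Eu_one n] at h1
    simp only [map_sum, LinearMap.sum_apply, hBE, and_self, Finset.sum_ite_eq', Finset.sum_ite_eq,
      Finset.mem_univ, if_true] at h1
    rw [show ∑ i : Fin n, c i i = ∑ _i : Fin n, c z z from
      Finset.sum_congr rfl fun i _ => hall i i] at h1
    simpa [Finset.sum_const, Finset.card_univ, nsmul_eq_mul] using h1
  have hczz : c z z = 1 / (n : ℂ) := by
    field_simp
    linear_combination hnorm
  -- final expansion
  intro x y
  conv_lhs => rw [Matrix.matrix_eq_sum_single x]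
  conv_lhs => rw [Matrix.matrix_eq_sum_single y]
  have hsb : ∀ (i j : Fin n) (a : ℂ), Matrix.single i j a = a • Eu n i j := by
    intro i j a
    rw [show Eu n i j = Matrix.single i j (1:ℂ) from rfl,
      Matrix.smul_single, smul_eq_mul, mul_one]
  simp only [hsb, map_sum, LinearMap.sum_apply, _root_.map_smul, LinearMap.smul_apply,
    smul_eq_mul, hBE, mul_ite, mul_zero, ite_and, Finset.sum_ite_eq, Finset.sum_ite_eq',
    Finset.sum_ite_irrel, Finset.sum_const_zero, Finset.mem_univ, if_true]
  rw [Matrix.trace]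
  simp only [Matrix.diag_apply, Matrix.mul_apply]
  conv_lhs => rw [Finset.sum_comm]
  rw [Finset.sum_div]
  refine Finset.sum_congr rfl fun i _ => ?_
  rw [Finset.sum_div]
  refine Finset.sum_congr rfl fun j _ => ?_
  rw [hall i j, hczz]
  ring
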